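/- Fix V > 0 and for B > 0 define λ*₁(B) := (4V/π)·[1 − 4I₂(√B)/(√B·I₁(√B))]^{−1}. Then 0 < 4I₂(√B)/(√B·I₁(√B)) < 1 for every B > 0 (so λ*₁(B) is well defined and positive), the map B ↦ λ*₁(B) is strictly decreasing on (0,∞), and λ*₁(B) → 4V/π as B → ∞. -/

import Mathlib

/-- Modified Bessel function of the first kind of (natural) order `n`,
`I_n(x) = sum_k (x/2)^(2k+n) / (k! * Gamma (k+n+1))`. -/
noncomputable def besselI (n : ℕ) (x : ℝ) : ℝ :=
  ∑' k : ℕ, (x / 2) ^ (2 * k + n) / ((k.factorial : ℝ) * Real.Gamma (k + n + 1))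

/-- The squared maximal sloshing frequency lambda*1(B) for m = 1 with surface tension. -/
noncomputable def lamStarR1 (V B : ℝ) : ℝ :=
  (4 * V / Real.pi) * (1 - 4 * besselI 2 (Real.sqrt B) /
    (Real.sqrt B * besselI 1 (Real.sqrt B)))⁻¹

open Filter

set_option maxHeartbeats 1000000

namespace LamAux

noncomputable def c (k : ℕ) : ℝ := ((k.factorial : ℝ) * (k+2).factorial)⁻¹
noncomputable def d (k : ℕ) : ℝ := ((k.factorial : ℝ) * (k+1).factorial)⁻¹
lemma c_pos (k : ℕ) : 0 < c k := by unfold c; positivity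
lemma d_pos (k : ℕ) : 0 < d k := by unfold d; positivity
noncomputable def F (t : ℝ) : ℝ := ∑' k : ℕ, c k * t^k
noncomputable def G (t : ℝ) : ℝ := ∑' k : ℕ, d k * t^k

lemma summable_F (t : ℝ) : Summable (fun k : ℕ => c k * t^k) := by
  apply Summable.of_abs
  apply Summable.of_nonneg_of_le (fun k => abs_nonneg _) _ (Real.summable_pow_div_factorial |t|)
  intro k
  rw [abs_mul, abs_of_nonneg (c_pos k).le, abs_pow]
  rw [div_eq_mul_inv, mul_comm]
  apply mul_le_mul_of_nonneg_left _ (pow_nonneg (abs_nonneg t) k)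
  unfold c
  rw [mul_inv]
  have h1 : ((k+2).factorial : ℝ)⁻¹ ≤ 1 := by
    rw [inv_le_one_iff₀]; right; exact_mod_cast Nat.one_le_iff_ne_zero.mpr (Nat.factorial_ne_zero _)
  calc ((k.factorial:ℝ))⁻¹ * ((k+2).factorial : ℝ)⁻¹ ≤ ((k.factorial:ℝ))⁻¹ * 1 :=
        mul_le_mul_of_nonneg_left h1 (by positivity)
    _ = (k.factorial:ℝ)⁻¹ := by ring

lemma summable_G (t : ℝ) : Summable (fun k : ℕ => d k * t^k) := by
  apply Summable.of_abs
  apply Summable.of_nonneg_of_le (fun k => abs_nonneg _) _ (Real.summable_pow_div_factorial |t|)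
  intro k
  rw [abs_mul, abs_of_nonneg (d_pos k).le, abs_pow]
  rw [div_eq_mul_inv, mul_comm]
  apply mul_le_mul_of_nonneg_left _ (pow_nonneg (abs_nonneg t) k)
  unfold d
  rw [mul_inv]
  have h1 : ((k+1).factorial : ℝ)⁻¹ ≤ 1 := by
    rw [inv_le_one_iff₀]; right; exact_mod_cast Nat.one_le_iff_ne_zero.mpr (Nat.factorial_ne_zero _)
  calc ((k.factorial:ℝ))⁻¹ * ((k+1).factorial : ℝ)⁻¹ ≤ ((k.factorial:ℝ))⁻¹ * 1 :=
        mul_le_mul_of_nonneg_left h1 (by positivity)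
    _ = (k.factorial:ℝ)⁻¹ := by ring

lemma besselI_one (x : ℝ) : besselI 1 x = x/2 * G ((x/2)^2) := by
  unfold besselI G
  rw [← tsum_mul_left]
  congr 1; ext k
  have h1 : ((k:ℝ) + 1 + 1) = ((k+1 : ℕ) : ℝ) + 1 := by push_cast; ring
  rw [show ((k:ℝ) + (1:ℕ) + 1) = ((k+1 : ℕ) : ℝ) + 1 by push_cast; ring,
    Real.Gamma_nat_eq_factorial]
  unfold d
  rw [← pow_mul, pow_add]
  field_simp

lemma besselI_two (x : ℝ) : besselI 2 x = x^2/4 * F ((x/2)^2) := by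
  unfold besselI F
  rw [← tsum_mul_left]
  congr 1; ext k
  rw [show ((k:ℝ) + (2:ℕ) + 1) = ((k+2 : ℕ) : ℝ) + 1 by push_cast; ring,
    Real.Gamma_nat_eq_factorial]
  unfold c
  rw [← pow_mul, pow_add]
  have : ((x/2):ℝ)^2 = x^2/4 := by ring
  field_simp
  ring

lemma F_pos {t : ℝ} (ht : 0 ≤ t) : 0 < F t :=
  Summable.tsum_pos (summable_F t) (fun k => mul_nonneg (c_pos k).le (pow_nonneg ht k)) 0
    (by simpa using c_pos 0)

lemma G_pos {t : ℝ} (ht : 0 ≤ t) : 0 < G t :=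
  Summable.tsum_pos (summable_G t) (fun k => mul_nonneg (d_pos k).le (pow_nonneg ht k)) 0
    (by simpa using d_pos 0)

lemma two_c_le_d (k : ℕ) : 2 * c k ≤ d k := by
  unfold c d
  rw [Nat.factorial_succ (k+1)]
  have h1 : (0:ℝ) < (k.factorial : ℝ) := by positivity
  have h2 : (0:ℝ) < ((k+1).factorial : ℝ) := by positivity
  have h3 : (2:ℝ) ≤ ((k:ℝ)+1+1) := by push_cast; linarith [Nat.cast_nonneg (α := ℝ) k]
  rw [mul_inv, mul_inv]
  push_cast
  rw [mul_inv]
  have h4 : (((k:ℝ)+1+1))⁻¹ ≤ 2⁻¹ := by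
    apply inv_anti₀ (by norm_num) h3
  calc 2 * ((k.factorial:ℝ)⁻¹ * ((((k:ℝ)+1+1))⁻¹ * ((k+1).factorial:ℝ)⁻¹))
      = (2 * (((k:ℝ)+1+1))⁻¹) * ((k.factorial:ℝ)⁻¹ * ((k+1).factorial:ℝ)⁻¹) := by ring
    _ ≤ 1 * ((k.factorial:ℝ)⁻¹ * ((k+1).factorial:ℝ)⁻¹) := by
        apply mul_le_mul_of_nonneg_right _ (by positivity)
        calc 2 * (((k:ℝ)+1+1))⁻¹ ≤ 2 * 2⁻¹ := by linarith
          _ = 1 := by norm_num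
    _ = (k.factorial:ℝ)⁻¹ * ((k+1).factorial:ℝ)⁻¹ := by ring

lemma two_F_lt_G {t : ℝ} (ht : 0 < t) : 2 * F t < G t := by
  unfold F G
  rw [← tsum_mul_left]
  apply Summable.tsum_lt_tsum (i := 1) _ _ ((summable_F t).mul_left 2) (summable_G t)
  · intro k
    calc 2 * (c k * t^k) = (2 * c k) * t^k := by ring
      _ ≤ d k * t^k := mul_le_mul_of_nonneg_right (two_c_le_d k) (pow_nonneg ht.le k)
  · have hc : c 1 = 6⁻¹ := by unfold c; norm_num [Nat.factorial]
    have hd : d 1 = 2⁻¹ := by unfold d; norm_num [Nat.factorial]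
    rw [hc, hd]
    nlinarith [pow_pos ht 1]

lemma A_le {j k : ℕ} (h : j ≤ k) : c k * d j ≤ c j * d k := by
  have hnat : (j+2).factorial * (k+1).factorial ≤ (j+1).factorial * (k+2).factorial := by
    rw [Nat.factorial_succ (j+1), Nat.factorial_succ (k+1)]
    calc (j+1+1) * (j+1).factorial * (k+1).factorial
        ≤ (k+1+1) * (j+1).factorial * (k+1).factorial :=
          Nat.mul_le_mul_right _ (Nat.mul_le_mul_right _ (by omega))
      _ = (j+1).factorial * ((k+1+1) * (k+1).factorial) := by ring
  have hcast : ((j+2).factorial : ℝ) * (k+1).factorial ≤ ((j+1).factorial : ℝ) * (k+2).factorial := by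
    exact_mod_cast hnat
  unfold c d
  rw [← mul_inv, ← mul_inv]
  apply inv_anti₀ (by positivity)
  have hjk : (0:ℝ) ≤ (j.factorial : ℝ) * (k.factorial : ℝ) := by positivity
  nlinarith [mul_le_mul_of_nonneg_left hcast hjk]

lemma B_le {s t : ℝ} (hs : 0 ≤ s) (hst : s ≤ t) {j k : ℕ} (h : j ≤ k) :
    t^j * s^k ≤ s^j * t^k := by
  obtain ⟨m, rfl⟩ := Nat.exists_eq_add_of_le h
  rw [pow_add, pow_add]
  calc t^j * (s^j * s^m) = (s^j * t^j) * s^m := by ring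
    _ ≤ (s^j * t^j) * t^m := by
        apply mul_le_mul_of_nonneg_left (pow_le_pow_left₀ hs hst m)
        exact mul_nonneg (pow_nonneg hs j) (pow_nonneg (hs.trans hst) j)
    _ = s^j * (t^j * t^m) := by ring

lemma cross {s t : ℝ} (hs : 0 ≤ s) (hst : s < t) : F t * G s < F s * G t := by
  have ht : 0 ≤ t := hs.trans hst.le
  have hfs : ∀ u : ℝ, 0 ≤ u → ∀ k : ℕ, 0 ≤ c k * u^k :=
    fun u hu k => mul_nonneg (c_pos k).le (pow_nonneg hu k)
  have hgs : ∀ u : ℝ, 0 ≤ u → ∀ k : ℕ, 0 ≤ d k * u^k :=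
    fun u hu k => mul_nonneg (d_pos k).le (pow_nonneg hu k)
  have hsum1 : Summable (fun p : ℕ × ℕ => (c p.1 * s^p.1) * (d p.2 * t^p.2)) :=
    Summable.mul_of_nonneg (f := fun k : ℕ => c k * s^k) (g := fun k : ℕ => d k * t^k)
      (summable_F s) (summable_G t) (hfs s hs) (hgs t ht)
  have hsum2 : Summable (fun p : ℕ × ℕ => (c p.1 * t^p.1) * (d p.2 * s^p.2)) :=
    Summable.mul_of_nonneg (f := fun k : ℕ => c k * t^k) (g := fun k : ℕ => d k * s^k)
      (summable_F t) (summable_G s) (hfs t ht) (hgs s hs)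
  have h1 : HasSum (fun p : ℕ × ℕ => (c p.1 * s^p.1) * (d p.2 * t^p.2)) (F s * G t) :=
    HasSum.mul (f := fun k : ℕ => c k * s^k) (g := fun k : ℕ => d k * t^k)
      (summable_F s).hasSum (summable_G t).hasSum hsum1
  have h2 : HasSum (fun p : ℕ × ℕ => (c p.1 * t^p.1) * (d p.2 * s^p.2)) (F t * G s) :=
    HasSum.mul (f := fun k : ℕ => c k * t^k) (g := fun k : ℕ => d k * s^k)
      (summable_F t).hasSum (summable_G s).hasSum hsum2
  set φ : ℕ × ℕ → ℝ := fun p => (c p.1 * s^p.1) * (d p.2 * t^p.2) - (c p.1 * t^p.1) * (d p.2 * s^p.2) with hφdef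
  have hφ : HasSum φ (F s * G t - F t * G s) := h1.sub h2
  have hφsw : HasSum (fun p : ℕ × ℕ => φ (Equiv.prodComm ℕ ℕ p)) (F s * G t - F t * G s) :=
    (Equiv.prodComm ℕ ℕ).hasSum_iff.mpr hφ
  have hψ : HasSum (fun p : ℕ × ℕ => φ p + φ (Equiv.prodComm ℕ ℕ p))
      ((F s * G t - F t * G s) + (F s * G t - F t * G s)) := hφ.add hφsw
  have hψ_eq : ∀ p : ℕ × ℕ, φ p + φ (Equiv.prodComm ℕ ℕ p)
      = (c p.1 * d p.2 - c p.2 * d p.1) * (s^p.1 * t^p.2 - t^p.1 * s^p.2) := by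
    intro p; simp only [hφdef, Equiv.prodComm_apply, Prod.fst_swap, Prod.snd_swap]; ring
  have hψ_nonneg : ∀ p : ℕ × ℕ, 0 ≤ φ p + φ (Equiv.prodComm ℕ ℕ p) := by
    intro p
    rw [hψ_eq p]
    rcases le_total p.1 p.2 with h | h
    · apply mul_nonneg (sub_nonneg.mpr (A_le h)) (sub_nonneg.mpr (B_le hs hst.le h))
    · have h1 : c p.1 * d p.2 - c p.2 * d p.1 ≤ 0 := by have := A_le h; linarith
      have h2 : s^p.1 * t^p.2 - t^p.1 * s^p.2 ≤ 0 := by have := B_le hs hst.le h; linarith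
      have := mul_nonneg (neg_nonneg.mpr h1) (neg_nonneg.mpr h2)
      nlinarith [this]
  have hkey : φ (0,1) + φ (Equiv.prodComm ℕ ℕ (0,1))
      ≤ (F s * G t - F t * G s) + (F s * G t - F t * G s) := by
    exact le_hasSum hψ (0,1) (fun j _ => hψ_nonneg j)
  have hval : φ (0,1) + φ (Equiv.prodComm ℕ ℕ (0,1)) = 12⁻¹ * (t - s) := by
    rw [hψ_eq (0,1)]
    unfold c d
    norm_num [Nat.factorial]
  have hts : (0:ℝ) < 12⁻¹ * (t - s) := by
    have : (0:ℝ) < t - s := sub_pos.mpr hst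
    positivity
  linarith [hkey, hval.symm.le.trans hkey]

lemma c_eq (m : ℕ) : c m = d m * ((m:ℝ)+2)⁻¹ := by
  unfold c d
  rw [Nat.factorial_succ (m+1)]
  push_cast
  rw [mul_inv, mul_inv]
  ring

lemma F_split {t : ℝ} (ht : 0 ≤ t) (n : ℕ) :
    F t ≤ (∑ k ∈ Finset.range n, c k * t^k) + G t * ((n:ℝ)+2)⁻¹ := by
  have hsplit := Summable.sum_add_tsum_nat_add n (summable_F t)
  have htail_sum : Summable (fun k : ℕ => c (k+n) * t^(k+n)) :=
    (summable_nat_add_iff n).mpr (summable_F t)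
  have hGtail_sum : Summable (fun k : ℕ => d (k+n) * t^(k+n) * ((n:ℝ)+2)⁻¹) :=
    (((summable_nat_add_iff n).mpr (summable_G t)).mul_right _)
  have htail : (∑' k : ℕ, c (k+n) * t^(k+n)) ≤ G t * ((n:ℝ)+2)⁻¹ := by
    have h1 : (∑' k : ℕ, c (k+n) * t^(k+n)) ≤ ∑' k : ℕ, d (k+n) * t^(k+n) * ((n:ℝ)+2)⁻¹ := by
      apply Summable.tsum_le_tsum _ htail_sum hGtail_sum
      intro k
      rw [c_eq (k+n)]
      have h2 : (((k:ℝ)+n)+2)⁻¹ ≤ ((n:ℝ)+2)⁻¹ := by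
        apply inv_anti₀ (by positivity)
        push_cast; linarith [Nat.cast_nonneg (α := ℝ) k]
      have h3 : 0 ≤ d (k+n) * t^(k+n) := mul_nonneg (d_pos _).le (pow_nonneg ht _)
      calc d (k+n) * ((((k+n) : ℕ):ℝ)+2)⁻¹ * t^(k+n)
          = (d (k+n) * t^(k+n)) * ((((k+n) : ℕ):ℝ)+2)⁻¹ := by ring
        _ ≤ (d (k+n) * t^(k+n)) * ((n:ℝ)+2)⁻¹ := by
            apply mul_le_mul_of_nonneg_left _ h3
            push_cast; push_cast at h2; exact h2
        _ = d (k+n) * t^(k+n) * ((n:ℝ)+2)⁻¹ := by ring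
    have h4 : (∑' k : ℕ, d (k+n) * t^(k+n) * ((n:ℝ)+2)⁻¹)
        = (∑' k : ℕ, d (k+n) * t^(k+n)) * ((n:ℝ)+2)⁻¹ := tsum_mul_right
    have h5 : (∑' k : ℕ, d (k+n) * t^(k+n)) ≤ G t := by
      have hsplitG := Summable.sum_add_tsum_nat_add n (summable_G t)
      have hP : 0 ≤ ∑ k ∈ Finset.range n, d k * t^k :=
        Finset.sum_nonneg (fun k _ => mul_nonneg (d_pos k).le (pow_nonneg ht k))
      unfold G; linarith
    calc (∑' k : ℕ, c (k+n) * t^(k+n)) ≤ _ := h1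
      _ = _ := h4
      _ ≤ G t * ((n:ℝ)+2)⁻¹ := mul_le_mul_of_nonneg_right h5 (by positivity)
  unfold F
  linarith [hsplit, htail]

lemma ratio_tendsto : Tendsto (fun t : ℝ => F t / G t) atTop (nhds 0) := by
  rw [Metric.tendsto_atTop]
  intro ε hε
  obtain ⟨n, hn⟩ := exists_nat_gt (2/ε)
  have hn2 : ((n:ℝ)+2)⁻¹ < ε/2 := by
    have h0 : (0:ℝ) < 2/ε := by positivity
    have : ((n:ℝ)+2)⁻¹ < (2/ε)⁻¹ := by
      apply inv_strictAnti₀ h0; linarith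
    rwa [inv_div] at this
  set C : ℝ := ∑ k ∈ Finset.range n, c k with hC
  have hC0 : 0 ≤ C := Finset.sum_nonneg (fun k _ => (c_pos k).le)
  refine ⟨max 1 (2*(C+1)/(d n * ε)), fun t ht => ?_⟩
  have ht1 : (1:ℝ) ≤ t := le_trans (le_max_left _ _) ht
  have ht0 : (0:ℝ) < t := lt_of_lt_of_le one_pos ht1
  have htb : 2*(C+1)/(d n * ε) ≤ t := le_trans (le_max_right _ _) ht
  have hG := G_pos ht0.le
  have hF := F_pos ht0.le
  rw [Real.dist_eq, sub_zero, abs_of_nonneg (by positivity)]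
  have hdn := d_pos n
  have htn : (1:ℝ) ≤ t^n := by
    have := pow_le_pow_left₀ zero_le_one ht1 n
    simpa using this
  have hP : (∑ k ∈ Finset.range n, c k * t^k) ≤ C * (t^n / t) := by
    rw [hC, Finset.sum_mul]
    apply Finset.sum_le_sum
    intro k hk
    have hk' : k + 1 ≤ n := Finset.mem_range.mp hk
    have hkt : t^k ≤ t^n / t := by
      rw [le_div_iff₀ ht0, ← pow_succ]
      exact pow_le_pow_right₀ ht1 hk'
    exact mul_le_mul_of_nonneg_left hkt (c_pos k).le
  have hGlow : d n * t^n ≤ G t := by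
    unfold G
    exact Summable.le_tsum (summable_G t) n
      (fun j _ => mul_nonneg (d_pos j).le (pow_nonneg ht0.le j))
  have hC2 : C ≤ ε/2 * (d n * t) := by
    have hpos : (0:ℝ) < d n * ε := by positivity
    have h := mul_le_mul_of_nonneg_right htb hpos.le
    rw [div_mul_cancel₀ _ hpos.ne'] at h
    nlinarith
  have h6 : C * (t^n/t) ≤ ε/2 * G t := by
    have h7 : C * (t^n/t) ≤ (ε/2*(d n * t)) * (t^n/t) :=
      mul_le_mul_of_nonneg_right hC2 (by positivity)
    have h8 : (ε/2*(d n * t)) * (t^n/t) = ε/2 * (d n * t^n) := by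
      field_simp
    have h9 : ε/2 * (d n * t^n) ≤ ε/2 * G t :=
      mul_le_mul_of_nonneg_left hGlow (by positivity)
    linarith
  have h10 : G t * ((n:ℝ)+2)⁻¹ < G t * (ε/2) := by
    apply mul_lt_mul_of_pos_left hn2 hG
  rw [div_lt_iff₀ hG]
  linarith [F_split ht0.le n, hP, h6, h10]

lemma r_eq {B : ℝ} (hB : 0 < B) :
    4 * besselI 2 (Real.sqrt B) / (Real.sqrt B * besselI 1 (Real.sqrt B))
      = 2 * (F (B/4) / G (B/4)) := by
  set x := Real.sqrt B with hx
  have hx0 : 0 < x := Real.sqrt_pos.mpr hB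
  have hx2 : (x/2)^2 = B/4 := by
    have : x^2 = B := Real.sq_sqrt hB.le
    field_simp
    linarith [this]
  have hB4 : (0:ℝ) ≤ B/4 := by linarith
  rw [besselI_one, besselI_two, hx2]
  have hG := (G_pos hB4).ne'
  have hxx : x^2 = B := Real.sq_sqrt hB.le
  field_simp

lemma lam_eq {V B : ℝ} (hB : 0 < B) :
    lamStarR1 V B = (4 * V / Real.pi) * (1 - 2 * (F (B/4) / G (B/4)))⁻¹ := by
  unfold lamStarR1
  rw [r_eq hB]

lemma ratio_pos {t : ℝ} (ht : 0 < t) : 0 < 2 * (F t / G t) := by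
  have := F_pos ht.le; have := G_pos ht.le; positivity

lemma ratio_lt_one {t : ℝ} (ht : 0 < t) : 2 * (F t / G t) < 1 := by
  have hG := G_pos ht.le
  rw [mul_div_assoc', div_lt_one hG]
  exact two_F_lt_G ht

lemma ratio_anti {t₁ t₂ : ℝ} (h1 : 0 < t₁) (h12 : t₁ < t₂) :
    2 * (F t₂ / G t₂) < 2 * (F t₁ / G t₁) := by
  have hG1 := G_pos h1.le
  have hG2 := G_pos (h1.trans h12).le
  have hc := cross h1.le h12
  have : F t₂ / G t₂ < F t₁ / G t₁ := by
    rw [div_lt_div_iff₀ hG2 hG1]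
    exact hc
  linarith

end LamAux

open LamAux in
theorem lamStarR1_monotone_limit (V : ℝ) (hV : 0 < V) :
    (∀ B : ℝ, 0 < B →
      0 < 4 * besselI 2 (Real.sqrt B) / (Real.sqrt B * besselI 1 (Real.sqrt B)) ∧
      4 * besselI 2 (Real.sqrt B) / (Real.sqrt B * besselI 1 (Real.sqrt B)) < 1) ∧
    StrictAntiOn (lamStarR1 V) (Set.Ioi 0) ∧
    Filter.Tendsto (lamStarR1 V) Filter.atTop (nhds (4 * V / Real.pi)) := by
  have hK : 0 < 4 * V / Real.pi := by positivity
  refine ⟨fun B hB => ?_, ?_, ?_⟩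
  · rw [r_eq hB]
    exact ⟨ratio_pos (by linarith), ratio_lt_one (by linarith)⟩
  · intro a ha b hb hab
    simp only [Set.mem_Ioi] at ha hb
    rw [lam_eq ha, lam_eq hb]
    have ha4 : (0:ℝ) < a/4 := by linarith
    have hb4 : a/4 < b/4 := by linarith
    have hra1 : 2 * (F (a/4) / G (a/4)) < 1 := ratio_lt_one ha4
    have hrb0 : 0 < 2 * (F (b/4) / G (b/4)) := ratio_pos (ha4.trans hb4)
    have hanti : 2 * (F (b/4) / G (b/4)) < 2 * (F (a/4) / G (a/4)) := ratio_anti ha4 hb4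
    have h1 : 0 < 1 - 2 * (F (a/4) / G (a/4)) := by linarith
    have h2 : 1 - 2 * (F (a/4) / G (a/4)) < 1 - 2 * (F (b/4) / G (b/4)) := by linarith
    have hinv : (1 - 2 * (F (b/4) / G (b/4)))⁻¹ < (1 - 2 * (F (a/4) / G (a/4)))⁻¹ :=
      inv_strictAnti₀ h1 h2
    exact mul_lt_mul_of_pos_left hinv hK
  · have h1 : Tendsto (fun B : ℝ => B/4) atTop atTop := by
      apply Tendsto.atTop_div_const (by norm_num : (0:ℝ) < 4) tendsto_id
    have h2 : Tendsto (fun B : ℝ => F (B/4) / G (B/4)) atTop (nhds 0) :=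
      ratio_tendsto.comp h1
    have h3 : Tendsto (fun B : ℝ => (4 * V / Real.pi) * (1 - 2 * (F (B/4) / G (B/4)))⁻¹)
        atTop (nhds ((4 * V / Real.pi) * (1 - 2 * (0:ℝ))⁻¹)) := by
      apply Tendsto.const_mul
      apply Tendsto.inv₀
      · exact tendsto_const_nhds.sub (h2.const_mul 2)
      · norm_num
    have h4 : ((4 * V / Real.pi) * (1 - 2 * (0:ℝ))⁻¹) = 4 * V / Real.pi := by norm_num
    rw [h4] at h3
    apply h3.congr'
    filter_upwards [eventually_gt_atTop 0] with B hB
    exact (lam_eq hB).symm
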